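/- Let H be a real Hilbert space, A : H → H a continuous linear skew-adjoint operator, F : ℝ → H continuous, and u : ℝ → H a C¹ solution of u'(t) + A(u(t)) = F(t) on [0, T]. Then for all t ∈ [0, T], ‖u(t)‖ ≤ ‖u(0)‖ + 2 ∫₀ᵀ ‖F(s)‖ ds. -/
import Mathlib


open RealInnerProductSpace

theorem energy_estimate_inhomogeneous
    {H : Type*} [NormedAddCommGroup H] [InnerProductSpace ℝ H] [CompleteSpace H]
    (A : H →L[ℝ] H) (hA : ∀ x y : H, ⟪A x, y⟫ = -⟪x, A y⟫)
    (T : ℝ) (hT : 0 ≤ T) (F : ℝ → H) (hF : ContinuousOn F (Set.Icc 0 T))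
    (u u' : ℝ → H)
    (hu : ∀ t ∈ Set.Icc (0:ℝ) T, HasDerivAt u (u' t) t)
    (hu' : ContinuousOn u' (Set.Icc 0 T))
    (heq : ∀ t ∈ Set.Icc (0:ℝ) T, u' t + A (u t) = F t) :
    ∀ t ∈ Set.Icc (0:ℝ) T, ‖u t‖ ≤ ‖u 0‖ + 2 * ∫ s in (0:ℝ)..T, ‖F s‖ := by
  set I := ∫ s in (0:ℝ)..T, ‖F s‖ with hIdef
  have hucont : ContinuousOn u (Set.Icc 0 T) := fun t ht =>
    (hu t ht).continuousAt.continuousWithinAt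
  have hnorm_cont : ContinuousOn (fun t => ‖u t‖) (Set.Icc 0 T) := hucont.norm
  obtain ⟨t₀, ht₀, hmax⟩ := isCompact_Icc.exists_isMaxOn (Set.nonempty_Icc.mpr hT) hnorm_cont
  set M := ‖u t₀‖ with hMdef
  have hM0 : 0 ≤ M := norm_nonneg _
  have hle : ∀ t ∈ Set.Icc (0:ℝ) T, ‖u t‖ ≤ M := fun t ht => hmax ht
  have hI0 : 0 ≤ I := intervalIntegral.integral_nonneg hT (fun s _ => norm_nonneg _)
  have key : ∀ t ∈ Set.Icc (0:ℝ) T, ‖u t‖^2 ≤ ‖u 0‖^2 + 2*M*I := by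
    intro t ht
    obtain ⟨ht0, htT⟩ := ht
    have hsub : Set.Icc (0:ℝ) t ⊆ Set.Icc 0 T := Set.Icc_subset_Icc le_rfl htT
    have hderiv : ∀ s ∈ Set.uIcc (0:ℝ) t,
        HasDerivAt (fun τ => ⟪u τ, u τ⟫) (2 * ⟪F s, u s⟫) s := by
      intro s hs
      rw [Set.uIcc_of_le ht0] at hs
      have hs' := hsub hs
      have h1 := (hu s hs').inner ℝ (hu s hs')
      have hA0 : ⟪A (u s), u s⟫ = 0 := by
        linarith [hA (u s) (u s), real_inner_comm (u s) (A (u s))]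
      have hus : u' s = F s - A (u s) := by
        rw [eq_sub_iff_add_eq]; exact heq s hs'
      have h2 : ⟪u s, u' s⟫ + ⟪u' s, u s⟫ = 2 * ⟪F s, u s⟫ := by
        have hA0' : ⟪u s, A (u s)⟫ = 0 := (real_inner_comm _ _).trans hA0
        rw [hus, inner_sub_right, inner_sub_left, hA0', hA0, real_inner_comm (u s) (F s)]
        ring
      rwa [h2] at h1
    have hcont2 : ContinuousOn (fun s => 2 * ⟪F s, u s⟫) (Set.Icc 0 t) :=
      continuousOn_const.mul ((hF.mono hsub).inner (hucont.mono hsub))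
    have hint : IntervalIntegrable (fun s => 2 * ⟪F s, u s⟫) MeasureTheory.volume 0 t :=
      ContinuousOn.intervalIntegrable (by rw [Set.uIcc_of_le ht0]; exact hcont2)
    have hftc := intervalIntegral.integral_eq_sub_of_hasDerivAt hderiv hint
    have hintF : IntervalIntegrable (fun s => 2 * (‖F s‖ * M)) MeasureTheory.volume 0 t :=
      ContinuousOn.intervalIntegrable (by
        rw [Set.uIcc_of_le ht0]
        exact continuousOn_const.mul ((hF.mono hsub).norm.mul continuousOn_const))
    have hb1 : (∫ s in (0:ℝ)..t, 2 * ⟪F s, u s⟫) ≤ ∫ s in (0:ℝ)..t, 2 * (‖F s‖ * M) := by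
      apply intervalIntegral.integral_mono_on ht0 hint hintF
      intro s hs
      have h := real_inner_le_norm (F s) (u s)
      have h2 := hle s (hsub hs)
      nlinarith [norm_nonneg (F s)]
    have hb2 : (∫ s in (0:ℝ)..t, 2 * (‖F s‖ * M)) ≤ 2 * M * I := by
      have heqI : (∫ s in (0:ℝ)..t, 2 * (‖F s‖ * M)) = 2 * M * ∫ s in (0:ℝ)..t, ‖F s‖ := by
        rw [← intervalIntegral.integral_const_mul]
        congr 1; ext s; ring
      rw [heqI]
      have hmono : (∫ s in (0:ℝ)..t, ‖F s‖) ≤ I := by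
        apply intervalIntegral.integral_mono_interval le_rfl ht0 htT
        · filter_upwards with s using norm_nonneg _
        · exact ContinuousOn.intervalIntegrable (by rw [Set.uIcc_of_le hT]; exact hF.norm)
      nlinarith
    have hns : ⟪u t, u t⟫ = ‖u t‖^2 := real_inner_self_eq_norm_sq (u t)
    have hns0 : ⟪u 0, u 0⟫ = ‖u 0‖^2 := real_inner_self_eq_norm_sq (u 0)
    nlinarith [hftc]
  have hMkey : M^2 ≤ ‖u 0‖^2 + 2*M*I := by
    have := key t₀ ht₀
    simpa [← hMdef] using this
  have hMle : M ≤ ‖u 0‖ + 2*I := by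
    by_contra h
    push_neg at h
    nlinarith [norm_nonneg (u 0)]
  intro t ht
  exact (hle t ht).trans hMle
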